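/- Let y : [0,T] → ℝ be nonnegative and differentiable with y'(t) ≤ a + b·y(t)³ for constants a, b ≥ 0. If a·T + b·∫₀ᵀ y(s) ds + arctan(y(0)) < π/2, then for all t ∈ [0,T], y(t) ≤ tan(a·T + b·∫₀ᵀ y(s) ds + arctan(y(0))), so y does not blow up on [0,T]. -/

import Mathlib

open Real MeasureTheory intervalIntegral

theorem no_blowup_of_arctan_smallness (T a b : ℝ) (hT : 0 < T) (ha : 0 ≤ a) (hb : 0 ≤ b)
    (y y' : ℝ → ℝ)
    (hderiv : ∀ t ∈ Set.Icc (0:ℝ) T, HasDerivAt y (y' t) t)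
    (hnonneg : ∀ t ∈ Set.Icc (0:ℝ) T, 0 ≤ y t)
    (hineq : ∀ t ∈ Set.Icc (0:ℝ) T, y' t ≤ a + b * (y t) ^ 3)
    (hint : IntervalIntegrable y volume 0 T)
    (hsmall : a * T + b * (∫ s in (0:ℝ)..T, y s) + Real.arctan (y 0) < Real.pi / 2) :
    ∀ t ∈ Set.Icc (0:ℝ) T,
      y t ≤ Real.tan (a * T + b * (∫ s in (0:ℝ)..T, y s) + Real.arctan (y 0)) := by
  intro t ht
  obtain ⟨ht0, htT⟩ := ht
  set C : ℝ := a * T + b * (∫ s in (0:ℝ)..T, y s) + Real.arctan (y 0) with hC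
  have hIint : ∀ u ∈ Set.Icc (0:ℝ) T, IntervalIntegrable y volume 0 u := by
    intro u hu
    refine hint.mono_set ?_
    rw [Set.uIcc_of_le hu.1, Set.uIcc_of_le hT.le]
    exact Set.Icc_subset_Icc le_rfl hu.2
  have hInonneg : ∀ u v : ℝ, 0 ≤ u → u ≤ v → v ≤ T →
      (0:ℝ) ≤ ∫ s in u..v, y s := by
    intro u v hu huv hv
    refine intervalIntegral.integral_nonneg huv ?_
    intro s hs
    exact hnonneg s ⟨hu.trans hs.1, hs.2.trans hv⟩
  -- the comparison function
  set F : ℝ → ℝ := fun u => a * u + b * (∫ s in (0:ℝ)..u, y s) - Real.arctan (y u) with hF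
  have hcontY : ContinuousOn y (Set.Icc 0 T) := fun u hu =>
    (hderiv u hu).continuousAt.continuousWithinAt
  have hcontF : ContinuousOn F (Set.Icc 0 T) := by
    have h1 : ContinuousOn (fun u : ℝ => ∫ s in (0:ℝ)..u, y s) (Set.Icc 0 T) := by
      have := intervalIntegral.continuousOn_primitive_interval' hint
        (Set.left_mem_uIcc (a := (0:ℝ)) (b := T))
      rwa [Set.uIcc_of_le hT.le] at this
    exact ((continuousOn_id.const_smul a).add (h1.const_smul b)).sub
      (Real.continuous_arctan.comp_continuousOn hcontY)
  have hderivF : ∀ u ∈ Set.Ioo (0:ℝ) T,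
      HasDerivAt F (a + b * y u - 1 / (1 + (y u) ^ 2) * y' u) u := by
    intro u hu
    have huI : u ∈ Set.Icc (0:ℝ) T := Set.mem_Icc_of_Ioo hu
    have hmeas : StronglyMeasurableAtFilter y (nhds u) := by
      refine ⟨Set.Ioo (0:ℝ) T, Ioo_mem_nhds hu.1 hu.2, ?_⟩
      exact hint.1.aestronglyMeasurable.mono_measure
        (Measure.restrict_mono Set.Ioo_subset_Ioc_self le_rfl)
    have hB : HasDerivAt (fun v => ∫ s in (0:ℝ)..v, y s) (y u) u :=
      intervalIntegral.integral_hasDerivAt_right (hIint u huI) hmeas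
        (hderiv u huI).continuousAt
    have hArc : HasDerivAt (fun v => Real.arctan (y v))
        (1 / (1 + (y u) ^ 2) * y' u) u :=
      (Real.hasDerivAt_arctan (y u)).comp u (hderiv u huI)
    have := (((hasDerivAt_id u).const_mul a).add (hB.const_mul b)).sub hArc
    exact this.congr_deriv (by ring)
  have hFmono : MonotoneOn F (Set.Icc 0 T) := by
    refine monotoneOn_of_deriv_nonneg (convex_Icc 0 T) hcontF ?_ ?_
    · intro u hu
      rw [interior_Icc] at hu
      exact ((hderivF u hu).differentiableAt).differentiableWithinAt
    · intro u hu
      rw [interior_Icc] at hu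
      have huI : u ∈ Set.Icc (0:ℝ) T := Set.mem_Icc_of_Ioo hu
      rw [(hderivF u hu).deriv]
      have hy : 0 ≤ y u := hnonneg u huI
      have hq : y' u ≤ a + b * (y u) ^ 3 := hineq u huI
      have hP : (0:ℝ) < 1 + (y u) ^ 2 := by positivity
      rw [sub_nonneg, one_div, inv_mul_le_iff₀ hP]
      nlinarith [mul_nonneg ha (sq_nonneg (y u)), mul_nonneg hb hy,
        mul_nonneg (mul_nonneg hb hy) (sq_nonneg (y u))]
  have hF0 : F 0 = -Real.arctan (y 0) := by simp [hF]
  have hFt : F 0 ≤ F t := hFmono (Set.left_mem_Icc.mpr hT.le) ⟨ht0, htT⟩ ht0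
  have hkey : Real.arctan (y t) ≤ C := by
    have h1 : Real.arctan (y t) ≤ a * t + b * (∫ s in (0:ℝ)..t, y s) + Real.arctan (y 0) := by
      rw [hF0] at hFt
      simp only [hF] at hFt
      linarith
    have h2 : a * t ≤ a * T := mul_le_mul_of_nonneg_left htT ha
    have h3 : (∫ s in (0:ℝ)..t, y s) ≤ ∫ s in (0:ℝ)..T, y s := by
      have hsplit : (∫ s in (0:ℝ)..t, y s) + (∫ s in t..T, y s)
          = ∫ s in (0:ℝ)..T, y s := by
        refine intervalIntegral.integral_add_adjacent_intervals (hIint t ⟨ht0, htT⟩) ?_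
        refine hint.mono_set ?_
        rw [Set.uIcc_of_le htT, Set.uIcc_of_le hT.le]
        exact Set.Icc_subset_Icc ht0 le_rfl
      have := hInonneg t T ht0 htT le_rfl
      linarith
    have h4 : b * (∫ s in (0:ℝ)..t, y s) ≤ b * (∫ s in (0:ℝ)..T, y s) :=
      mul_le_mul_of_nonneg_left h3 hb
    rw [hC]; linarith
  have hCnonneg : (0:ℝ) ≤ C := by
    have h1 : 0 ≤ a * T := mul_nonneg ha hT.le
    have h2 : 0 ≤ b * (∫ s in (0:ℝ)..T, y s) := mul_nonneg hb (hInonneg 0 T le_rfl hT.le le_rfl)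
    have h3 : 0 ≤ Real.arctan (y 0) := by
      have := Real.arctan_strictMono.monotone (hnonneg 0 ⟨le_rfl, hT.le⟩)
      simpa using this
    rw [hC]; linarith
  have hCmem : C ∈ Set.Ioo (-(Real.pi/2)) (Real.pi/2) :=
    ⟨lt_of_lt_of_le (by linarith [Real.pi_pos]) hCnonneg, hsmall⟩
  calc y t = Real.tan (Real.arctan (y t)) := (Real.tan_arctan _).symm
    _ ≤ Real.tan C :=
      Real.strictMonoOn_tan.monotoneOn (Real.arctan_mem_Ioo _) hCmem hkey
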